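/- arXiv:math/9801049 — 2 statements merged into one kernel-verified Lean document; each statement's English description precedes it below -/
import Mathlib

section
/- Let Λ be a positive definite symmetric n×n real matrix and let Z = ∫_{ℝ^n} exp(−xᵀΛx/2) dx. Then for all indices i, j, the function x ↦ x_i·x_j·exp(−xᵀΛx/2) is integrable on ℝ^n and (1/Z) · ∫_{ℝ^n} x_i·x_j·exp(−xᵀΛx/2) dx = (Λ⁻¹)_{ij}, the (i,j) entry of the inverse matrix of Λ. -/
open Matrix Real MeasureTheory

lemma gm_int0 : Integrable (fun x : ℝ => Real.exp (-x ^ 2 / 2)) := by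
  have h := integrable_exp_neg_mul_sq (show (0:ℝ) < 1/2 by norm_num)
  simpa [neg_div, div_eq_inv_mul, mul_comm] using h

lemma gm_int1 : Integrable (fun x : ℝ => x * Real.exp (-x ^ 2 / 2)) := by
  have h := integrable_mul_exp_neg_mul_sq (show (0:ℝ) < 1/2 by norm_num)
  simpa [neg_div, div_eq_inv_mul, mul_comm] using h

lemma gm_int2 : Integrable (fun x : ℝ => x ^ 2 * Real.exp (-x ^ 2 / 2)) := by
  have h := integrable_rpow_mul_exp_neg_mul_sq (show (0:ℝ) < 1/2 by norm_num)
    (show (-1:ℝ) < 2 by norm_num)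
  have h2 : ∀ x : ℝ, x ^ (2:ℝ) = x ^ 2 := fun x => by
    rw [show (2:ℝ) = ((2:ℕ):ℝ) by norm_num, Real.rpow_natCast]
  simp only [h2] at h
  simpa [neg_div, div_eq_inv_mul, mul_comm] using h

lemma gm_eval0 : ∫ x : ℝ, Real.exp (-x ^ 2 / 2) = Real.sqrt (2 * π) := by
  have h := integral_gaussian (1/2)
  rw [show π / (1/2) = 2 * π by ring] at h
  simpa [neg_div, div_eq_inv_mul, mul_comm] using h

lemma gm_eval1 : ∫ x : ℝ, x * Real.exp (-x ^ 2 / 2) = 0 := by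
  have h := integral_neg_eq_self (fun t : ℝ => t * Real.exp (-t ^ 2 / 2)) (volume : Measure ℝ)
  simp only [neg_sq, neg_mul] at h
  rw [integral_neg] at h
  linarith [h]

lemma gm_gamma32 : Real.Gamma (3/2) = Real.sqrt π / 2 := by
  have h := Real.Gamma_add_one (show (1/2:ℝ) ≠ 0 by norm_num)
  rw [show (1/2:ℝ) + 1 = 3/2 by norm_num] at h
  rw [h, Real.Gamma_one_half_eq]; ring

lemma gm_eval2 : ∫ x : ℝ, x ^ 2 * Real.exp (-x ^ 2 / 2) = Real.sqrt (2 * π) := by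
  have habs : ∫ x : ℝ, (fun t : ℝ => t ^ 2 * Real.exp (-t ^ 2 / 2)) |x|
      = 2 * ∫ x in Set.Ioi (0:ℝ), x ^ 2 * Real.exp (-x ^ 2 / 2) :=
    _root_.integral_comp_abs (f := fun t : ℝ => t ^ 2 * Real.exp (-t ^ 2 / 2))
  simp only [sq_abs] at habs
  rw [habs]
  have h := integral_rpow_mul_exp_neg_mul_rpow (show (0:ℝ) < 2 by norm_num)
    (show (-1:ℝ) < 2 by norm_num) (show (0:ℝ) < 1/2 by norm_num)
  have h2 : ∀ x : ℝ, x ^ (2:ℝ) = x ^ 2 := fun x => by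
    rw [show (2:ℝ) = ((2:ℕ):ℝ) by norm_num, Real.rpow_natCast]
  simp only [h2] at h
  have heq : ∫ x in Set.Ioi (0:ℝ), x ^ 2 * Real.exp (-x ^ 2 / 2)
      = ∫ x in Set.Ioi (0:ℝ), x ^ 2 * Real.exp (-(1/2) * x ^ 2) := by
    congr 1; ext x; ring_nf
  rw [heq, h, show ((2:ℝ)+1)/2 = 3/2 by norm_num, gm_gamma32]
  have : ((1:ℝ)/2) ^ (-((3:ℝ)/2)) = 2 ^ ((3:ℝ)/2) := by
    rw [one_div, Real.inv_rpow (by norm_num), Real.rpow_neg (by norm_num), inv_inv]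
  rw [show -((2:ℝ)+1)/2 = -((3:ℝ)/2) by norm_num, this, show (3:ℝ)/2 = 1 + 1/2 by norm_num, Real.rpow_add (by norm_num), Real.rpow_one]
  rw [show (2:ℝ) ^ ((1:ℝ)/2) = Real.sqrt 2 by rw [Real.sqrt_eq_rpow]]
  rw [Real.sqrt_mul (by norm_num)]
  ring


theorem gaussian_second_moments (n : ℕ) (i j : Fin n)
    (Λ : Matrix (Fin n) (Fin n) ℝ) (hΛ : Λ.PosDef)
    (Z : ℝ) (hZ : Z = ∫ x : Fin n → ℝ, Real.exp (-(x ⬝ᵥ Λ.mulVec x) / 2)) :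
    Integrable (fun x : Fin n → ℝ =>
      x i * x j * Real.exp (-(x ⬝ᵥ Λ.mulVec x) / 2)) ∧
    (1 / Z) * ∫ x : Fin n → ℝ, x i * x j * Real.exp (-(x ⬝ᵥ Λ.mulVec x) / 2)
      = Λ⁻¹ i j := by
  classical
  have hΛdet : Λ.det ≠ 0 := hΛ.det_pos.ne'
  have hΛsym : Λᵀ = Λ := by
    rw [← Matrix.conjTranspose_eq_transpose_of_trivial]; exact hΛ.1
  set B := (open MatrixOrder in CFC.sqrt Λ) with hBdef
  have hBB : B * B = Λ := (open MatrixOrder in CFC.sqrt_mul_sqrt_self Λ hΛ.posSemidef.nonneg)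
  have hBsym : Bᵀ = B := by
    rw [← Matrix.conjTranspose_eq_transpose_of_trivial]
    exact (open MatrixOrder in (CFC.sqrt_nonneg Λ).posSemidef.1)
  have hBdet : B.det ≠ 0 := by
    intro h
    apply hΛdet
    rw [← hBB, Matrix.det_mul, h, mul_zero]
  set S := B⁻¹ with hSdef
  have hSB : S * B = 1 := Matrix.nonsing_inv_mul B hBdet.isUnit
  have hBS : B * S = 1 := Matrix.mul_nonsing_inv B hBdet.isUnit
  have hSdet : S.det ≠ 0 := by
    rw [hSdef, Matrix.det_nonsing_inv, Ring.inverse_eq_inv']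
    exact inv_ne_zero hBdet
  have hSsym : Sᵀ = S := by rw [hSdef, Matrix.transpose_nonsing_inv, hBsym]
  have hSS : S * S = Λ⁻¹ := by rw [hSdef, ← Matrix.mul_inv_rev, hBB]
  have hSΛS : S * Λ * S = 1 := by
    rw [← hBB, ← Matrix.mul_assoc, Matrix.mul_assoc (S * B) B S, hSB, hBS, Matrix.one_mul]
  -- quadratic form
  have hquad : ∀ y : Fin n → ℝ, (S *ᵥ y) ⬝ᵥ Λ *ᵥ (S *ᵥ y) = y ⬝ᵥ y := by
    intro y
    rw [Matrix.mulVec_mulVec, dotProduct_mulVec, Matrix.vecMul_mulVec,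
      hSsym, ← Matrix.mul_assoc, hSΛS, Matrix.vecMul_one]
  set c : ℝ := Real.sqrt (2 * π) with hcdef
  have hc0 : (0:ℝ) < c := Real.sqrt_pos.mpr (by positivity)
  have hP : ∀ y : Fin n → ℝ, Real.exp (-(y ⬝ᵥ y) / 2) = ∏ m, Real.exp (-(y m) ^ 2 / 2) := by
    intro y
    rw [← Real.exp_sum]
    congr 1
    rw [dotProduct, neg_div, Finset.sum_div, ← Finset.sum_neg_distrib]
    exact Finset.sum_congr rfl fun m _ => by ring
  have hFint : ∀ k l m : Fin n, Integrable (fun t : ℝ =>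
      (if m = k then t else 1) * (if m = l then t else 1) * Real.exp (-t ^ 2 / 2)) := by
    intro k l m
    by_cases hk : m = k
    · by_cases hl : m = l
      · simp only [if_pos hk, if_pos hl]
        simpa only [← pow_two] using gm_int2
      · simp only [if_pos hk, if_neg hl, mul_one]
        exact gm_int1
    · by_cases hl : m = l
      · simp only [if_neg hk, if_pos hl, one_mul]
        exact gm_int1
      · simp only [if_neg hk, if_neg hl, one_mul]
        exact gm_int0
  have hH : ∀ (k l : Fin n) (y : Fin n → ℝ),
      (∏ m, ((if m = k then y m else 1) * (if m = l then y m else 1) * Real.exp (-(y m) ^ 2 / 2)))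
      = y k * y l * Real.exp (-(y ⬝ᵥ y) / 2) := by
    intro k l y
    rw [hP y, Finset.prod_mul_distrib, Finset.prod_mul_distrib,
      Finset.prod_ite_eq' Finset.univ k (fun m => y m),
      Finset.prod_ite_eq' Finset.univ l (fun m => y m)]
    simp
  have hHint : ∀ k l : Fin n, Integrable (fun y : Fin n → ℝ =>
      ∏ m, ((if m = k then y m else 1) * (if m = l then y m else 1) * Real.exp (-(y m) ^ 2 / 2))) :=
    fun k l => Integrable.fintype_prod (𝕜 := ℝ)
      (f := fun m t => (if m = k then t else 1) * (if m = l then t else 1) * Real.exp (-t ^ 2 / 2))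
      (fun m => hFint k l m)
  have hHeval : ∀ k l : Fin n, (∫ y : Fin n → ℝ,
      ∏ m, ((if m = k then y m else 1) * (if m = l then y m else 1) * Real.exp (-(y m) ^ 2 / 2)))
      = if k = l then c ^ n else 0 := by
    intro k l
    rw [MeasureTheory.integral_fintype_prod_volume_eq_prod (ι := Fin n)
      (f := fun m t => (if m = k then t else 1) * (if m = l then t else 1) * Real.exp (-t ^ 2 / 2))]
    by_cases hkl : k = l
    · subst hkl
      rw [if_pos rfl]
      have heach : ∀ m : Fin n, (∫ t : ℝ,
          (if m = k then t else 1) * (if m = k then t else 1) * Real.exp (-t ^ 2 / 2)) = c := by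
        intro m
        by_cases hm : m = k
        · simp only [if_pos hm]
          calc (∫ t : ℝ, t * t * Real.exp (-t ^ 2 / 2))
              = ∫ t : ℝ, t ^ 2 * Real.exp (-t ^ 2 / 2) := by
                congr 1; funext t; rw [← pow_two]
            _ = c := gm_eval2
        · simp only [if_neg hm, one_mul]
          exact gm_eval0
      rw [Finset.prod_congr rfl (fun m _ => heach m), Finset.prod_const, Finset.card_univ,
        Fintype.card_fin]

    · rw [if_neg hkl]
      apply Finset.prod_eq_zero (Finset.mem_univ k)
      simp only [if_pos rfl, if_neg hkl, mul_one]
      exact gm_eval1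
  -- expansion of the transformed integrand
  have hg : ∀ y : Fin n → ℝ, (S *ᵥ y) i * (S *ᵥ y) j * Real.exp (-(y ⬝ᵥ y) / 2)
      = ∑ k, ∑ l, S i k * S j l *
        ∏ m, ((if m = k then y m else 1) * (if m = l then y m else 1)
          * Real.exp (-(y m) ^ 2 / 2)) := by
    intro y
    simp_rw [hH]
    simp only [Matrix.mulVec, dotProduct]
    rw [Finset.sum_mul_sum, Finset.sum_mul]
    refine Finset.sum_congr rfl fun k _ => ?_
    rw [Finset.sum_mul]
    refine Finset.sum_congr rfl fun l _ => by ring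
  have hgint : Integrable (fun y : Fin n → ℝ => ∑ k, ∑ l, S i k * S j l *
      ∏ m, ((if m = k then y m else 1) * (if m = l then y m else 1)
        * Real.exp (-(y m) ^ 2 / 2))) :=
    integrable_finset_sum _ fun k _ => integrable_finset_sum _ fun l _ =>
      (hHint k l).const_mul _
  have hgeval : (∫ y : Fin n → ℝ, ∑ k, ∑ l, S i k * S j l *
      ∏ m, ((if m = k then y m else 1) * (if m = l then y m else 1)
        * Real.exp (-(y m) ^ 2 / 2))) = Λ⁻¹ i j * c ^ n := by
    rw [integral_finset_sum _ fun k _ => integrable_finset_sum _ fun l _ =>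
      (hHint k l).const_mul _]
    have step : ∀ k : Fin n, (∫ y : Fin n → ℝ, ∑ l, S i k * S j l *
        ∏ m, ((if m = k then y m else 1) * (if m = l then y m else 1)
          * Real.exp (-(y m) ^ 2 / 2))) = S i k * S j k * c ^ n := by
      intro k
      rw [integral_finset_sum _ fun l _ => (hHint k l).const_mul _]
      have : ∀ l : Fin n, (∫ y : Fin n → ℝ, S i k * S j l *
          ∏ m, ((if m = k then y m else 1) * (if m = l then y m else 1)
            * Real.exp (-(y m) ^ 2 / 2))) = S i k * S j l * (if k = l then c ^ n else 0) := by
        intro l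
        rw [MeasureTheory.integral_const_mul, hHeval k l]
      rw [Finset.sum_congr rfl fun l _ => this l]
      simp [Finset.sum_ite_eq, mul_ite, mul_zero]
    rw [Finset.sum_congr rfl fun k _ => step k]
    have hS' : ∀ k : Fin n, S j k = S k j := by
      intro k
      conv_lhs => rw [← hSsym]
      rw [Matrix.transpose_apply]
    rw [← hSS, Matrix.mul_apply, Finset.sum_mul]
    exact Finset.sum_congr rfl fun k _ => by rw [hS' k]
  -- change of variables
  have hmap : Measure.map (Matrix.toLin' S) (volume : Measure (Fin n → ℝ))
      = ENNReal.ofReal |S.det|⁻¹ • volume := by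
    have h := Real.map_matrix_volume_pi_eq_smul_volume_pi hSdet
    rwa [abs_inv] at h
  let e : (Fin n → ℝ) ≃ₗ[ℝ] (Fin n → ℝ) :=
    LinearEquiv.ofLinear (Matrix.toLin' S) (Matrix.toLin' B)
      (by rw [← Matrix.toLin'_mul, hSB, Matrix.toLin'_one])
      (by rw [← Matrix.toLin'_mul, hBS, Matrix.toLin'_one])
  have hemb : MeasurableEmbedding (fun y : Fin n → ℝ => S *ᵥ y) := by
    have heq : (fun y : Fin n → ℝ => S *ᵥ y)
        = ⇑(e.toContinuousLinearEquiv).toHomeomorph := by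
      funext y
      rfl
    rw [heq]
    exact (e.toContinuousLinearEquiv).toHomeomorph.measurableEmbedding
  have habs0 : (0:ℝ) < |S.det| := abs_pos.mpr hSdet
  have hcov : ∀ f : (Fin n → ℝ) → ℝ, AEStronglyMeasurable f (volume : Measure (Fin n → ℝ)) →
      (∫ x, f x) = |S.det| * ∫ y, f (S *ᵥ y) := by
    intro f hf
    have hmeas : AEStronglyMeasurable f (Measure.map (Matrix.toLin' S) volume) := by
      rw [hmap]
      exact hf.mono_ac (Measure.absolutelyContinuous_of_le_smul (c := ENNReal.ofReal |S.det|⁻¹) le_rfl)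
    have h1 : (∫ y, f ((Matrix.toLin' S) y)) = ∫ x, f x ∂(Measure.map (Matrix.toLin' S) volume) :=
      (MeasureTheory.integral_map (Continuous.aemeasurable (LinearMap.continuous_on_pi _)) hmeas).symm
    rw [hmap, MeasureTheory.integral_smul_measure,
      ENNReal.toReal_ofReal (by positivity), smul_eq_mul] at h1
    simp only [Matrix.toLin'_apply] at h1
    rw [h1, ← mul_assoc, mul_inv_cancel₀ habs0.ne', one_mul]
  have hintf : ∀ f : (Fin n → ℝ) → ℝ, Integrable (fun y => f (S *ᵥ y)) → Integrable f := by
    intro f hf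
    have h2 : Integrable f (Measure.map (fun y : Fin n → ℝ => S *ᵥ y) volume) :=
      hemb.integrable_map_iff.mpr hf
    have hmap' : Measure.map (fun y : Fin n → ℝ => S *ᵥ y) volume
        = ENNReal.ofReal |S.det|⁻¹ • volume := by
      rw [show (fun y : Fin n → ℝ => S *ᵥ y) = ⇑(Matrix.toLin' S) from
        funext fun y => (Matrix.toLin'_apply S y).symm]
      exact hmap
    rw [hmap'] at h2
    exact (integrable_smul_measure
      (ne_of_gt (ENNReal.ofReal_pos.mpr (by positivity))) ENNReal.ofReal_ne_top).mp h2
  -- continuity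
  have hcont : Continuous fun x : Fin n → ℝ => x ⬝ᵥ Λ *ᵥ x := by
    simp only [dotProduct, Matrix.mulVec]
    exact continuous_finset_sum _ fun k _ => (continuous_apply k).mul
      (continuous_finset_sum _ fun l _ => continuous_const.mul (continuous_apply l))
  have hcf0 : Continuous fun x : Fin n → ℝ => Real.exp (-(x ⬝ᵥ Λ *ᵥ x) / 2) :=
    Real.continuous_exp.comp ((hcont.neg).div_const 2)
  have hcf : Continuous fun x : Fin n → ℝ => x i * x j * Real.exp (-(x ⬝ᵥ Λ *ᵥ x) / 2) :=
    ((continuous_apply i).mul (continuous_apply j)).mul hcf0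
  -- value of Z
  have hZval : Z = |S.det| * c ^ n := by
    rw [hZ, hcov _ hcf0.aestronglyMeasurable]
    congr 1
    simp_rw [hquad, hP]
    rw [MeasureTheory.integral_fintype_prod_volume_eq_prod (ι := Fin n)
      (f := fun _ t => Real.exp (-t ^ 2 / 2))]
    simp [gm_eval0, hcdef]
  -- main integral
  have hmain : (∫ x : Fin n → ℝ, x i * x j * Real.exp (-(x ⬝ᵥ Λ *ᵥ x) / 2))
      = |S.det| * (Λ⁻¹ i j * c ^ n) := by
    rw [hcov _ hcf.aestronglyMeasurable]
    congr 1
    simp_rw [hquad, hg]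
    exact hgeval
  have hint : Integrable (fun x : Fin n → ℝ => x i * x j * Real.exp (-(x ⬝ᵥ Λ *ᵥ x) / 2)) := by
    apply hintf
    have heq2 : (fun y : Fin n → ℝ =>
        (S *ᵥ y) i * (S *ᵥ y) j * Real.exp (-((S *ᵥ y) ⬝ᵥ Λ *ᵥ (S *ᵥ y)) / 2))
        = fun y => ∑ k, ∑ l, S i k * S j l *
          ∏ m, ((if m = k then y m else 1) * (if m = l then y m else 1)
            * Real.exp (-(y m) ^ 2 / 2)) := by
      funext y
      rw [hquad, hg]
    rw [heq2]
    exact hgint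
  refine ⟨hint, ?_⟩
  rw [hmain, hZval]
  field_simp
end

section
/- Let Λ be a positive definite symmetric n×n real matrix, let Σ = Λ⁻¹, and let Z = ∫_{ℝ^n} exp(−xᵀΛx/2) dx. Then for all indices i, j, k, l, the function x ↦ x_i·x_j·x_k·x_l·exp(−xᵀΛx/2) is integrable on ℝ^n and (1/Z) · ∫_{ℝ^n} x_i·x_j·x_k·x_l·exp(−xᵀΛx/2) dx = Σ_{ij}·Σ_{kl} + Σ_{ik}·Σ_{jl} + Σ_{il}·Σ_{jk}. -/
open Matrix Real MeasureTheory Filter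

noncomputable section WickAux

-- single term of exp series
lemma pow_le_factorial_mul_exp {x : ℝ} (hx : 0 ≤ x) (k : ℕ) : x ^ k ≤ k.factorial * exp x := by
  have h1 : x ^ k / k.factorial ≤ ∑ i ∈ Finset.range (k+1), x ^ i / i.factorial := by
    refine Finset.single_le_sum (f := fun i => x ^ i / i.factorial) ?_ (Finset.self_mem_range_succ k)
    intro i _
    positivity
  have h2 := Real.sum_le_exp_of_nonneg hx (k+1)
  have hk : (0:ℝ) < k.factorial := by exact_mod_cast k.factorial_pos
  calc x ^ k = (x ^ k / k.factorial) * k.factorial := by field_simp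
  _ ≤ exp x * k.factorial := by nlinarith [h1.trans h2]
  _ = k.factorial * exp x := by ring

lemma gauss_pow_bounded (k : ℕ) : ∃ C, ∀ x : ℝ, ‖x ^ k * exp (-x^2/4)‖ ≤ C := by
  refine ⟨Real.sqrt (4 ^ k * k.factorial), fun x => ?_⟩
  rw [Real.norm_eq_abs]
  have h0 : |x ^ k * exp (-x^2/4)| = |x|^k * exp (-x^2/4) := by
    rw [abs_mul, abs_pow, abs_of_pos (exp_pos _)]
  rw [h0]
  have hnn : 0 ≤ |x|^k * exp (-x^2/4) := by positivity
  rw [← Real.sqrt_sq hnn]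
  apply Real.sqrt_le_sqrt
  have e1 : (exp (-x^2/4))^2 = exp (-x^2/2) := by
    rw [← Real.exp_nat_mul]; congr 1; push_cast; ring
  have e2 : (|x|^k)^2 = (x^2)^k := by rw [← pow_mul, pow_mul', sq_abs]
  have : (|x|^k * exp (-x^2/4))^2 = (x^2)^k * exp (-x^2/2) := by
    rw [mul_pow, e1, e2]
  rw [this]
  have hb := pow_le_factorial_mul_exp (x := x^2/2) (by positivity) k
  have hx2 : (x^2)^k ≤ 2^k * k.factorial * exp (x^2/2) := by
    have : (x^2)^k = 2^k * (x^2/2)^k := by rw [← mul_pow]; ring_nf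
    rw [this]
    have h2k : (0:ℝ) < 2^k := by positivity
    calc 2^k * (x^2/2)^k ≤ 2^k * (k.factorial * exp (x^2/2)) := by
          exact mul_le_mul_of_nonneg_left hb h2k.le
    _ = 2^k * k.factorial * exp (x^2/2) := by ring
  calc (x^2)^k * exp (-x^2/2) ≤ (2^k * k.factorial * exp (x^2/2)) * exp (-x^2/2) := by
        exact mul_le_mul_of_nonneg_right hx2 (exp_pos _).le
  _ = 2^k * k.factorial := by rw [mul_assoc, ← exp_add]; ring_nf; simp
  _ ≤ 4^k * k.factorial := by
        have : (2:ℝ)^k ≤ 4^k := pow_le_pow_left₀ (by norm_num) (by norm_num) k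
        have hf : (0:ℝ) ≤ k.factorial := by positivity
        nlinarith

lemma integrable_gauss_pow (k : ℕ) : Integrable fun x : ℝ => x ^ k * exp (-x^2/2) := by
  have h : ∀ x : ℝ, x ^ k * exp (-x^2/2) = (x ^ k * exp (-x^2/4)) * exp (-(1/4) * x^2) := by
    intro x; rw [mul_assoc, ← exp_add]; ring_nf
  simp_rw [h]
  obtain ⟨C, hC⟩ := gauss_pow_bounded k
  refine Integrable.bdd_mul (c := C) (integrable_exp_neg_mul_sq (by norm_num)) ?_ (ae_of_all _ hC)
  exact ((measurable_id.pow_const k).mul (((measurable_id.pow_const 2).neg.div_const 4).exp)).aestronglyMeasurable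



noncomputable def gmom (k : ℕ) : ℝ := ∫ x : ℝ, x ^ k * exp (-x^2/2)

lemma gmom_zero : gmom 0 = Real.sqrt (2 * π) := by
  have h : ∀ x : ℝ, x ^ 0 * exp (-x^2/2) = exp (-(1/2) * x^2) := by
    intro x; rw [pow_zero, one_mul]; congr 1; ring
  rw [gmom]; simp_rw [h]
  rw [integral_gaussian]
  congr 1
  ring

lemma gmom_odd (k : ℕ) : gmom (2 * k + 1) = 0 := by
  have h := MeasureTheory.integral_neg_eq_self (fun x : ℝ => x ^ (2*k+1) * exp (-x^2/2)) volume
  have h2 : ∀ x : ℝ, (-x) ^ (2*k+1) * exp (-(-x)^2/2) = -(x ^ (2*k+1) * exp (-x^2/2)) := by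
    intro x
    rw [Odd.neg_pow ⟨k, by ring⟩, neg_sq]
    ring
  simp_rw [h2, integral_neg] at h
  have : gmom (2*k+1) = - gmom (2*k+1) := h.symm
  linarith

lemma gmom_step (k : ℕ) : gmom (k + 2) = (k + 1) * gmom k := by
  have hu : ∀ x : ℝ, HasDerivAt (fun t : ℝ => t ^ (k+1)) (((k:ℝ)+1) * x ^ k) x := by
    intro x
    simpa using (hasDerivAt_pow (k+1) x)
  have hv : ∀ x : ℝ, HasDerivAt (fun t : ℝ => -exp (-t^2/2)) (x * exp (-x^2/2)) x := by
    intro x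
    have h1 : HasDerivAt (fun t : ℝ => -t^2/2) (-x) x := by
      have := ((hasDerivAt_pow 2 x).neg).div_const 2
      simpa using this.congr_deriv (by push_cast; ring)
    have := (h1.exp).neg
    exact this.congr_deriv (by ring)
  have hIBP := integral_mul_deriv_eq_deriv_mul_of_integrable
    (u := fun t : ℝ => t ^ (k+1)) (v := fun t : ℝ => -exp (-t^2/2))
    (u' := fun t : ℝ => ((k:ℝ)+1) * t ^ k) (v' := fun t : ℝ => t * exp (-t^2/2))
    (fun x _ => hu x) (fun x _ => hv x) ?_ ?_ ?_
  · have e1 : ∀ x : ℝ, x ^ (k+1) * (x * exp (-x^2/2)) = x ^ (k+2) * exp (-x^2/2) := by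
      intro x; ring
    have e2 : ∀ x : ℝ, ((k:ℝ)+1) * x ^ k * (-exp (-x^2/2)) = -(((k:ℝ)+1) * (x ^ k * exp (-x^2/2))) := by
      intro x; ring
    rw [gmom, gmom]
    calc ∫ x : ℝ, x ^ (k+2) * exp (-x^2/2) = ∫ x : ℝ, (fun t : ℝ => t ^ (k+1)) x * ((fun t : ℝ => t * exp (-t^2/2)) x) := by
          simp_rw [e1]
    _ = - ∫ x : ℝ, ((k:ℝ)+1) * x ^ k * (-exp (-x^2/2)) := hIBP
    _ = ((k:ℝ)+1) * ∫ x : ℝ, x ^ k * exp (-x^2/2) := by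
          rw [← integral_neg, ← integral_const_mul]
          congr 1; funext x; ring
  · have : ∀ x : ℝ, (fun t : ℝ => t^(k+1)) x * (fun t : ℝ => t * exp (-t^2/2)) x = x ^ (k+2) * exp (-x^2/2) := fun x => by ring
    exact (integrable_gauss_pow (k+2)).congr (ae_of_all _ fun x => (this x).symm)
  · have : ∀ x : ℝ, -(((k:ℝ)+1) * (x ^ k * exp (-x^2/2))) = (fun t : ℝ => ((k:ℝ)+1)*t^k) x * (fun t : ℝ => -exp (-t^2/2)) x := fun x => by ring
    exact (((integrable_gauss_pow k).const_mul _).neg.congr (ae_of_all _ fun x => this x))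
  · have : ∀ x : ℝ, -(x ^ (k+1) * exp (-x^2/2)) = (fun t : ℝ => t^(k+1)) x * (fun t : ℝ => -exp (-t^2/2)) x := fun x => by ring
    exact ((integrable_gauss_pow (k+1)).neg.congr (ae_of_all _ fun x => this x))

lemma gmom_one : gmom 1 = 0 := by simpa using gmom_odd 0
lemma gmom_three : gmom 3 = 0 := by simpa using gmom_odd 1
lemma gmom_two : gmom 2 = Real.sqrt (2 * π) := by
  have := gmom_step 0
  norm_num at this
  rw [gmom_zero] at this; exact this
lemma gmom_four : gmom 4 = 3 * Real.sqrt (2 * π) := by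
  have := gmom_step 2
  norm_num at this
  rw [gmom_two] at this; exact this



noncomputable def Ngm : ℕ → ℝ
  | 0 => 1
  | 2 => 1
  | 4 => 3
  | _ => 0

lemma gmom_eq_Ngm {k : ℕ} (hk : k ≤ 4) : gmom k = Real.sqrt (2 * π) * Ngm k := by
  interval_cases k
  · rw [gmom_zero]; simp [Ngm]
  · rw [gmom_one]; simp [Ngm]
  · rw [gmom_two]; simp [Ngm]
  · rw [gmom_three]; simp [Ngm]
  · rw [gmom_four]; simp [Ngm]; ring

variable {n : ℕ}

def cnt (a b c d : Fin n) (m : Fin n) : ℕ :=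
  (if a = m then 1 else 0) + (if b = m then 1 else 0) + (if c = m then 1 else 0)
    + (if d = m then 1 else 0)

lemma cnt_le (a b c d m : Fin n) : cnt a b c d m ≤ 4 := by
  unfold cnt; split <;> split <;> split <;> split <;> norm_num

lemma prod_pow_cnt (a b c d : Fin n) (y : Fin n → ℝ) :
    ∏ m, (y m) ^ (cnt a b c d m) = y a * y b * y c * y d := by
  unfold cnt
  simp_rw [pow_add, Finset.prod_mul_distrib]
  have h : ∀ e : Fin n, ∏ m, (y m) ^ (if e = m then 1 else 0) = y e := by
    intro e
    have : ∀ m : Fin n, (y m) ^ (if e = m then 1 else 0) = if e = m then y m else 1 := by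
      intro m; split <;> simp
    simp_rw [this]
    simp
  rw [h a, h b, h c, h d]

lemma integrand_eq (a b c d : Fin n) (y : Fin n → ℝ) :
    y a * y b * y c * y d * exp (-(∑ m, (y m)^2) / 2)
      = ∏ m, ((y m) ^ (cnt a b c d m) * exp (-(y m)^2/2)) := by
  rw [Finset.prod_mul_distrib, prod_pow_cnt]
  congr 1
  rw [← Real.exp_sum]
  congr 1
  rw [← Finset.sum_div, ← Finset.sum_neg_distrib]

lemma integrable_std (c : Fin n → ℕ) :
    Integrable (fun y : Fin n → ℝ => ∏ m, ((y m) ^ (c m) * exp (-(y m)^2/2))) :=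
  Integrable.fintype_prod (f := fun m (t : ℝ) => t ^ (c m) * exp (-t^2/2))
    (fun m => integrable_gauss_pow (c m))

lemma integrable_std4 (a b c d : Fin n) :
    Integrable (fun y : Fin n → ℝ =>
      y a * y b * y c * y d * exp (-(∑ m, (y m)^2) / 2)) := by
  have := integrable_std (cnt a b c d)
  exact this.congr (ae_of_all _ fun y => (integrand_eq a b c d y).symm)

lemma integral_std (c : Fin n → ℕ) :
    ∫ y : Fin n → ℝ, ∏ m, ((y m) ^ (c m) * exp (-(y m)^2/2)) = ∏ m, gmom (c m) :=
  integral_fintype_prod_eq_prod (fun m (t : ℝ) => t ^ (c m) * exp (-t^2/2))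

def kron (a b : Fin n) : ℝ := if a = b then 1 else 0

lemma prod_zero_of (a b c d x : Fin n) (h : cnt a b c d x = 1 ∨ cnt a b c d x = 3) :
    ∏ m, Ngm (cnt a b c d m) = 0 := by
  apply Finset.prod_eq_zero (Finset.mem_univ x)
  rcases h with h | h <;> rw [h] <;> rfl

lemma prod_Ngm_cnt (a b c d : Fin n) :
    ∏ m, Ngm (cnt a b c d m)
      = kron a b * kron c d + kron a c * kron b d + kron a d * kron b c := by
  by_cases hab : a = b
  · subst hab
    by_cases hac : a = c
    · subst hac
      by_cases had : a = d
      · subst had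
        have hL : ∏ m, Ngm (cnt a a a a m) = 3 := by
          rw [Finset.prod_eq_single a]
          · have : cnt a a a a a = 4 := by simp [cnt]
            rw [this]; rfl
          · intro m _ hm
            have h' : a ≠ m := fun h => hm h.symm
            have : cnt a a a a m = 0 := by simp [cnt, h']
            rw [this]; rfl
          · simp
        rw [hL]; simp [kron]; norm_num
      · have hL := prod_zero_of a a a d d (Or.inl (by simp [cnt, had]))
        rw [hL]; simp [kron, had]
    · by_cases hcd : c = d
      · subst hcd
        have hL : ∏ m, Ngm (cnt a a c c m) = 1 := by
          apply Finset.prod_eq_one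
          intro m _
          by_cases h1 : a = m
          · subst h1
            have : cnt a a c c a = 2 := by simp [cnt, Ne.symm hac]
            rw [this]; rfl
          · by_cases h2 : c = m
            · subst h2
              have : cnt a a c c c = 2 := by simp [cnt, hac]
              rw [this]; rfl
            · have : cnt a a c c m = 0 := by simp [cnt, h1, h2]
              rw [this]; rfl
        rw [hL]; simp [kron, hac]
      · by_cases had : a = d
        · subst had
          have hL := prod_zero_of a a c a c (Or.inl (by simp [cnt, hac]))
          rw [hL]; simp [kron, hac, Ne.symm hac]
        · have hL := prod_zero_of a a c d c (Or.inl (by simp [cnt, hac, Ne.symm hcd]))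
          rw [hL]; simp [kron, hac, had, hcd]
  · by_cases hac : a = c
    · subst hac
      by_cases hbd : b = d
      · subst hbd
        have hL : ∏ m, Ngm (cnt a b a b m) = 1 := by
          apply Finset.prod_eq_one
          intro m _
          by_cases h1 : a = m
          · subst h1
            have : cnt a b a b a = 2 := by simp [cnt, Ne.symm hab]
            rw [this]; rfl
          · by_cases h2 : b = m
            · subst h2
              have : cnt a b a b b = 2 := by simp [cnt, hab]
              rw [this]; rfl
            · have : cnt a b a b m = 0 := by simp [cnt, h1, h2]
              rw [this]; rfl
        rw [hL]; simp [kron, hab]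
      · by_cases had : a = d
        · subst had
          have hL := prod_zero_of a b a a b (Or.inl (by simp [cnt, hab]))
          rw [hL]; simp [kron, hab, Ne.symm hab]
        · have hL := prod_zero_of a b a d b (Or.inl (by simp [cnt, hab, Ne.symm hbd]))
          rw [hL]; simp [kron, hab, had, hbd]
    · by_cases hbc : b = c
      · subst hbc
        by_cases had : a = d
        · subst had
          have hL : ∏ m, Ngm (cnt a b b a m) = 1 := by
            apply Finset.prod_eq_one
            intro m _
            by_cases h1 : a = m
            · subst h1
              have : cnt a b b a a = 2 := by simp [cnt, Ne.symm hab]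
              rw [this]; rfl
            · by_cases h2 : b = m
              · subst h2
                have : cnt a b b a b = 2 := by simp [cnt, hab]
                rw [this]; rfl
              · have : cnt a b b a m = 0 := by simp [cnt, h1, h2]
                rw [this]; rfl
          rw [hL]; simp [kron, hab]
        · by_cases hbd : b = d
          · subst hbd
            have hL := prod_zero_of a b b b a (Or.inl (by simp [cnt, Ne.symm hab]))
            rw [hL]; simp [kron, hab]
          · have hL := prod_zero_of a b b d a (Or.inl (by simp [cnt, Ne.symm hab, Ne.symm had]))
            rw [hL]; simp [kron, hab, had]
      · by_cases had : a = d
        · subst had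
          have hL := prod_zero_of a b c a b (Or.inl (by simp [cnt, hab, Ne.symm hbc]))
          rw [hL]; simp [kron, hab, hac, hbc]
        · by_cases hbd : b = d
          · subst hbd
            have hL := prod_zero_of a b c b a (Or.inl (by simp [cnt, Ne.symm hab, Ne.symm hac]))
            rw [hL]; simp [kron, hab, hac]
          · by_cases hcd : c = d
            · subst hcd
              have hL := prod_zero_of a b c c a (Or.inl (by simp [cnt, Ne.symm hab, Ne.symm hac]))
              rw [hL]; simp [kron, hab, hac]
            · have hL := prod_zero_of a b c d a (Or.inl (by simp [cnt, Ne.symm hab, Ne.symm hac, Ne.symm had]))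
              rw [hL]; simp [kron, hab, hac, had]


lemma integral_std4 (a b c d : Fin n) :
    ∫ y : Fin n → ℝ, y a * y b * y c * y d * exp (-(∑ m, (y m)^2) / 2)
      = Real.sqrt (2 * π) ^ n *
        (kron a b * kron c d + kron a c * kron b d + kron a d * kron b c) := by
  simp_rw [integrand_eq a b c d]
  rw [integral_std]
  have : ∀ m : Fin n, gmom (cnt a b c d m) = Real.sqrt (2*π) * Ngm (cnt a b c d m) :=
    fun m => gmom_eq_Ngm (cnt_le a b c d m)
  simp_rw [this]
  rw [Finset.prod_mul_distrib, Finset.prod_const, prod_Ngm_cnt, Finset.card_univ, Fintype.card_fin]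

lemma exp_sum_eq (y : Fin n → ℝ) :
    exp (-(∑ m, (y m)^2) / 2) = ∏ m, ((y m) ^ (0:ℕ) * exp (-(y m)^2/2)) := by
  simp_rw [pow_zero, one_mul, ← Real.exp_sum]
  congr 1
  rw [← Finset.sum_div, ← Finset.sum_neg_distrib]

lemma integral_std0 :
    ∫ y : Fin n → ℝ, exp (-(∑ m, (y m)^2) / 2) = Real.sqrt (2 * π) ^ n := by
  simp_rw [exp_sum_eq]
  rw [integral_std (fun _ => 0)]
  rw [Finset.prod_const, gmom_zero, Finset.card_univ, Fintype.card_fin]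

lemma integrable_std0 :
    Integrable (fun y : Fin n → ℝ => exp (-(∑ m, (y m)^2) / 2)) := by
  have := integrable_std (n := n) (fun _ => 0)
  exact this.congr (ae_of_all _ fun y => (exp_sum_eq y).symm)


variable {n : ℕ}

lemma map_mulVec_volume {M C : Matrix (Fin n) (Fin n) ℝ} (hMC : M * C = 1) :
    Measure.map (fun y : Fin n → ℝ => M *ᵥ y) volume
      = ENNReal.ofReal |M.det|⁻¹ • volume := by
  have hdet : M.det ≠ 0 := by
    intro h
    have := congrArg Matrix.det hMC
    rw [det_mul, h, zero_mul, det_one] at this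
    norm_num at this
  have h := Real.map_matrix_volume_pi_eq_smul_volume_pi (M := M) hdet
  rw [abs_inv] at h
  have hfun : (fun y : Fin n → ℝ => M *ᵥ y) = ⇑(Matrix.toLin' M) := by
    funext y; rw [Matrix.toLin'_apply]
  rw [hfun, h]

noncomputable def mulVecEquiv {M C : Matrix (Fin n) (Fin n) ℝ} (hMC : M * C = 1)
    (hCM : C * M = 1) : (Fin n → ℝ) ≃ₗ[ℝ] (Fin n → ℝ) :=
  LinearEquiv.ofLinear (Matrix.toLin' M) (Matrix.toLin' C)
    (by rw [← Matrix.toLin'_mul, hMC, Matrix.toLin'_one])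
    (by rw [← Matrix.toLin'_mul, hCM, Matrix.toLin'_one])

lemma measurableEmbedding_mulVec {M C : Matrix (Fin n) (Fin n) ℝ} (hMC : M * C = 1)
    (hCM : C * M = 1) : MeasurableEmbedding (fun y : Fin n → ℝ => M *ᵥ y) := by
  have h : (fun y : Fin n → ℝ => M *ᵥ y)
      = ((mulVecEquiv hMC hCM).toContinuousLinearEquiv.toHomeomorph : (Fin n → ℝ) → (Fin n → ℝ)) := by
    ext y m
    simp [mulVecEquiv, Matrix.toLin'_apply]
  rw [h]
  exact (mulVecEquiv hMC hCM).toContinuousLinearEquiv.toHomeomorph.measurableEmbedding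

lemma integrable_of_comp_mulVec {M C : Matrix (Fin n) (Fin n) ℝ} (hMC : M * C = 1)
    (hCM : C * M = 1) {f : (Fin n → ℝ) → ℝ}
    (hi : Integrable (fun y => f (M *ᵥ y))) : Integrable f := by
  have hemb := measurableEmbedding_mulVec hMC hCM
  have h1 : Integrable f (Measure.map (fun y : Fin n → ℝ => M *ᵥ y) volume) := by
    rw [hemb.integrable_map_iff]
    exact hi
  rw [map_mulVec_volume hMC] at h1
  have hdet : M.det ≠ 0 := by
    intro h
    have := congrArg Matrix.det hMC
    rw [det_mul, h, zero_mul, det_one] at this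
    norm_num at this
  rw [integrable_smul_measure (by simp [hdet]) (by simp)] at h1
  exact h1

lemma integral_comp_mulVec {M C : Matrix (Fin n) (Fin n) ℝ} (hMC : M * C = 1)
    (hCM : C * M = 1) (f : (Fin n → ℝ) → ℝ) :
    ∫ x, f x = |M.det| * ∫ y, f (M *ᵥ y) := by
  by_cases hi : Integrable (fun y => f (M *ᵥ y))
  · have hemb := measurableEmbedding_mulVec hMC hCM
    have h1 : ∫ y, f (M *ᵥ y) = ∫ x, f x ∂(Measure.map (fun y : Fin n → ℝ => M *ᵥ y) volume) := by
      rw [hemb.integral_map]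
    rw [h1, map_mulVec_volume hMC, integral_smul_measure]
    have hdet : M.det ≠ 0 := by
      intro h
      have := congrArg Matrix.det hMC
      rw [det_mul, h, zero_mul, det_one] at this
      norm_num at this
    rw [ENNReal.toReal_ofReal (by positivity), smul_eq_mul, ← mul_assoc]
    rw [mul_inv_cancel₀ (by simpa [abs_ne_zero] using hdet : |M.det| ≠ 0), one_mul]
  · have hnf : ¬ Integrable f := by
      intro hf
      apply hi
      have hemb := measurableEmbedding_mulVec hMC hCM
      have : Integrable f (Measure.map (fun y : Fin n → ℝ => M *ᵥ y) volume) := by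
        rw [map_mulVec_volume hMC]
        exact hf.smul_measure (by simp)
      rw [hemb.integrable_map_iff] at this
      exact this
    rw [integral_undef hi, integral_undef hnf, mul_zero]


variable {n : ℕ}

open scoped MatrixOrder in
lemma exists_B (Λ : Matrix (Fin n) (Fin n) ℝ) (hΛ : Λ.PosDef) :
    ∃ B C : Matrix (Fin n) (Fin n) ℝ,
      B * C = 1 ∧ C * B = 1 ∧ 0 < |B.det| ∧
      (∀ y : Fin n → ℝ, (B *ᵥ y) ⬝ᵥ Λ *ᵥ (B *ᵥ y) = ∑ m, (y m)^2) ∧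
      (∀ p q, Λ⁻¹ p q = ∑ a, B p a * B q a) := by
  set A := CFC.sqrt Λ with hAdef
  have hAs : A * A = Λ := CFC.sqrt_mul_sqrt_self Λ (Matrix.nonneg_iff_posSemidef.mpr hΛ.posSemidef)
  have hAH : A.IsHermitian := (Matrix.nonneg_iff_posSemidef.mp (CFC.sqrt_nonneg Λ)).1
  have hAt : Aᵀ = A := by
    have := hAH
    rwa [Matrix.IsHermitian, conjTranspose_eq_transpose_of_trivial] at this
  have hdetΛ : Λ.det ≠ 0 := hΛ.det_pos.ne'
  have hdetA : A.det ≠ 0 := by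
    intro h
    apply hdetΛ
    rw [← hAs, det_mul, h, zero_mul]
  have hU : IsUnit A.det := isUnit_iff_ne_zero.2 hdetA
  refine ⟨A⁻¹, A, nonsing_inv_mul A hU, mul_nonsing_inv A hU, ?_, ?_, ?_⟩
  · have : A⁻¹.det ≠ 0 := by
      rw [det_nonsing_inv]
      simpa using hdetA
    exact abs_pos.mpr this
  · intro y
    have hBt : A⁻¹ᵀ = A⁻¹ := by rw [transpose_nonsing_inv, hAt]
    have hkey : A⁻¹ᵀ * (Λ * A⁻¹) = 1 := by
      rw [hBt, ← hAs]
      calc A⁻¹ * (A * A * A⁻¹) = (A⁻¹ * A) * (A * A⁻¹) := by noncomm_ring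
      _ = 1 := by rw [nonsing_inv_mul A hU, mul_nonsing_inv A hU, one_mul]
    rw [mulVec_mulVec, Matrix.dotProduct_mulVec, ← vecMul_transpose, vecMul_vecMul, hkey,
      vecMul_one]
    simp [dotProduct, pow_two]
  · intro p q
    have hBt : A⁻¹ᵀ = A⁻¹ := by rw [transpose_nonsing_inv, hAt]
    have hinv : Λ⁻¹ = A⁻¹ * A⁻¹ := by rw [← hAs, Matrix.mul_inv_rev]
    rw [hinv, Matrix.mul_apply]
    congr 1
    funext a
    congr 1
    calc A⁻¹ a q = A⁻¹ᵀ q a := rfl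
    _ = A⁻¹ q a := by rw [hBt]

end WickAux

lemma kron_collapse {n : ℕ} (F : Fin n → ℝ) (c : Fin n) : ∑ d, F d * kron c d = F c := by
  rw [Finset.sum_eq_single c]
  · simp [kron]
  · intro d _ hdc
    have : c ≠ d := fun h => hdc h.symm
    simp [kron, this]
  · intro h; exact absurd (Finset.mem_univ c) h

set_option maxHeartbeats 2000000 in
theorem gaussian_fourth_moments_wick (n : ℕ) (i j k l : Fin n)
    (Λ : Matrix (Fin n) (Fin n) ℝ) (hΛ : Λ.PosDef)
    (S : Matrix (Fin n) (Fin n) ℝ) (hS : S = Λ⁻¹)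
    (Z : ℝ) (hZ : Z = ∫ x : Fin n → ℝ, Real.exp (-(x ⬝ᵥ Λ.mulVec x) / 2)) :
    Integrable (fun x : Fin n → ℝ =>
      x i * x j * x k * x l * Real.exp (-(x ⬝ᵥ Λ.mulVec x) / 2)) ∧
    (1 / Z) * ∫ x : Fin n → ℝ,
        x i * x j * x k * x l * Real.exp (-(x ⬝ᵥ Λ.mulVec x) / 2)
      = S i j * S k l + S i k * S j l + S i l * S j k := by
  obtain ⟨B, C, hBC, hCB, hdet, hquad, hinv⟩ := exists_B Λ hΛ
  set Z₀ : ℝ := Real.sqrt (2 * π) ^ n with hZ₀def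
  have hZ₀pos : 0 < Z₀ := by
    apply pow_pos
    apply Real.sqrt_pos.2
    positivity
  have hcoord : ∀ (y : Fin n → ℝ) (p : Fin n), (B *ᵥ y) p = ∑ a, B p a * y a := by
    intro y p; rfl
  have hexp : ∀ y : Fin n → ℝ,
      (B *ᵥ y) i * (B *ᵥ y) j * (B *ᵥ y) k * (B *ᵥ y) l
          * Real.exp (-((B *ᵥ y) ⬝ᵥ Λ.mulVec (B *ᵥ y)) / 2)
        = ∑ a, ∑ b, ∑ c, ∑ d, (B l a * B k b * B j c * B i d) *
            (y a * y b * y c * y d * exp (-(∑ m, (y m)^2) / 2)) := by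
    intro y
    rw [show Λ.mulVec (B *ᵥ y) = Λ *ᵥ (B *ᵥ y) from rfl, hquad y,
      hcoord y i, hcoord y j, hcoord y k, hcoord y l]
    simp only [Finset.sum_mul, Finset.mul_sum]
    refine Finset.sum_congr rfl fun a _ => Finset.sum_congr rfl fun b _ =>
      Finset.sum_congr rfl fun c _ => Finset.sum_congr rfl fun d _ => by ring
  have hIstd : ∀ a b c d : Fin n, Integrable (fun y : Fin n → ℝ =>
      (B l a * B k b * B j c * B i d) *
        (y a * y b * y c * y d * exp (-(∑ m, (y m)^2) / 2))) :=
    fun a b c d => (integrable_std4 a b c d).const_mul _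
  have hIsum : Integrable (fun y : Fin n → ℝ =>
      ∑ a, ∑ b, ∑ c, ∑ d, (B l a * B k b * B j c * B i d) *
        (y a * y b * y c * y d * exp (-(∑ m, (y m)^2) / 2))) := by
    refine integrable_finset_sum _ fun a _ => integrable_finset_sum _ fun b _ =>
      integrable_finset_sum _ fun c _ => integrable_finset_sum _ fun d _ => hIstd a b c d
  have hint : Integrable (fun x : Fin n → ℝ =>
      x i * x j * x k * x l * Real.exp (-(x ⬝ᵥ Λ.mulVec x) / 2)) := by
    apply integrable_of_comp_mulVec hBC hCB
    exact hIsum.congr (ae_of_all _ fun y => (hexp y).symm)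
  refine ⟨hint, ?_⟩
  have hinner : ∫ y : Fin n → ℝ,
      (B *ᵥ y) i * (B *ᵥ y) j * (B *ᵥ y) k * (B *ᵥ y) l
        * Real.exp (-((B *ᵥ y) ⬝ᵥ Λ.mulVec (B *ᵥ y)) / 2)
      = ∑ a, ∑ b, ∑ c, ∑ d, (B l a * B k b * B j c * B i d) *
          (Z₀ * (kron a b * kron c d + kron a c * kron b d + kron a d * kron b c)) := by
    rw [integral_congr_ae (ae_of_all _ hexp)]
    rw [integral_finset_sum _ (fun a _ => integrable_finset_sum _ fun b _ =>
      integrable_finset_sum _ fun c _ => integrable_finset_sum _ fun d _ => hIstd a b c d)]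
    refine Finset.sum_congr rfl fun a _ => ?_
    rw [integral_finset_sum _ (fun b _ => integrable_finset_sum _ fun c _ =>
      integrable_finset_sum _ fun d _ => hIstd a b c d)]
    refine Finset.sum_congr rfl fun b _ => ?_
    rw [integral_finset_sum _ (fun c _ => integrable_finset_sum _ fun d _ => hIstd a b c d)]
    refine Finset.sum_congr rfl fun c _ => ?_
    rw [integral_finset_sum _ (fun d _ => hIstd a b c d)]
    refine Finset.sum_congr rfl fun d _ => ?_
    rw [integral_const_mul, integral_std4]
  have hIval : ∫ x : Fin n → ℝ,
      x i * x j * x k * x l * Real.exp (-(x ⬝ᵥ Λ.mulVec x) / 2)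
      = |B.det| * ∑ a, ∑ b, ∑ c, ∑ d, (B l a * B k b * B j c * B i d) *
          (Z₀ * (kron a b * kron c d + kron a c * kron b d + kron a d * kron b c)) := by
    have h1 := integral_comp_mulVec hBC hCB
      (fun x => x i * x j * x k * x l * Real.exp (-(x ⬝ᵥ Λ.mulVec x) / 2))
    rw [h1, hinner]
  have hZval : Z = |B.det| * Z₀ := by
    rw [hZ]
    have h1 := integral_comp_mulVec hBC hCB
      (fun x => Real.exp (-(x ⬝ᵥ Λ.mulVec x) / 2))
    rw [h1]
    congr 1
    rw [integral_congr_ae (ae_of_all _ (fun y : Fin n → ℝ => by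
      rw [show Λ.mulVec (B *ᵥ y) = Λ *ᵥ (B *ᵥ y) from rfl, hquad y]))]
    exact integral_std0
  have hSpq : ∀ p q, S p q = ∑ a, B p a * B q a := by
    intro p q; rw [hS]; exact hinv p q
  have w1 : ∑ a, ∑ b, ∑ c, ∑ d, (B l a * B k b * B j c * B i d) * (kron a b * kron c d)
      = S i j * S k l := by
    have hd : ∀ a b c : Fin n, ∑ d, (B l a * B k b * B j c * B i d) * (kron a b * kron c d)
        = ((B l a * B k b * kron a b) * (B j c * B i c)) := by
      intro a b c
      calc ∑ d, (B l a * B k b * B j c * B i d) * (kron a b * kron c d)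
          = ∑ d, ((B l a * B k b * kron a b) * (B j c * B i d)) * kron c d :=
            Finset.sum_congr rfl fun d _ => by ring
      _ = _ := kron_collapse (fun d => (B l a * B k b * kron a b) * (B j c * B i d)) c
    have hc : ∀ a b : Fin n, ∑ c, ∑ d, (B l a * B k b * B j c * B i d) * (kron a b * kron c d)
        = (B l a * B k b * kron a b) * (∑ c, B j c * B i c) := by
      intro a b
      rw [Finset.sum_congr rfl fun c _ => hd a b c, ← Finset.mul_sum]
    have hb : ∀ a : Fin n, ∑ b, ∑ c, ∑ d, (B l a * B k b * B j c * B i d) * (kron a b * kron c d)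
        = (B l a * B k a) * (∑ c, B j c * B i c) := by
      intro a
      rw [Finset.sum_congr rfl fun b _ => hc a b]
      calc ∑ b, (B l a * B k b * kron a b) * (∑ c, B j c * B i c)
          = ∑ b, ((B l a * B k b) * (∑ c, B j c * B i c)) * kron a b :=
            Finset.sum_congr rfl fun b _ => by ring
      _ = _ := kron_collapse (fun b => (B l a * B k b) * (∑ c, B j c * B i c)) a
    rw [Finset.sum_congr rfl fun a _ => hb a, ← Finset.sum_mul, hSpq i j, hSpq k l]
    have e1 : ∑ a, B l a * B k a = ∑ a, B k a * B l a :=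
      Finset.sum_congr rfl fun a _ => by ring
    have e2 : ∑ c, B j c * B i c = ∑ c, B i c * B j c :=
      Finset.sum_congr rfl fun c _ => by ring
    rw [e1, e2]; ring
  have w2 : ∑ a, ∑ b, ∑ c, ∑ d, (B l a * B k b * B j c * B i d) * (kron a c * kron b d)
      = S i k * S j l := by
    have hd : ∀ a b c : Fin n, ∑ d, (B l a * B k b * B j c * B i d) * (kron a c * kron b d)
        = ((B l a * B j c * kron a c) * (B k b * B i b)) := by
      intro a b c
      calc ∑ d, (B l a * B k b * B j c * B i d) * (kron a c * kron b d)
          = ∑ d, ((B l a * B j c * kron a c) * (B k b * B i d)) * kron b d :=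
            Finset.sum_congr rfl fun d _ => by ring
      _ = _ := kron_collapse (fun d => (B l a * B j c * kron a c) * (B k b * B i d)) b
    have hc : ∀ a b : Fin n, ∑ c, ∑ d, (B l a * B k b * B j c * B i d) * (kron a c * kron b d)
        = (B l a * B j a) * (B k b * B i b) := by
      intro a b
      rw [Finset.sum_congr rfl fun c _ => hd a b c]
      calc ∑ c, (B l a * B j c * kron a c) * (B k b * B i b)
          = ∑ c, ((B l a * B j c) * (B k b * B i b)) * kron a c :=
            Finset.sum_congr rfl fun c _ => by ring
      _ = _ := kron_collapse (fun c => (B l a * B j c) * (B k b * B i b)) a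
    have hb : ∀ a : Fin n, ∑ b, ∑ c, ∑ d, (B l a * B k b * B j c * B i d) * (kron a c * kron b d)
        = (B l a * B j a) * (∑ b, B k b * B i b) := by
      intro a
      rw [Finset.sum_congr rfl fun b _ => hc a b, ← Finset.mul_sum]
    rw [Finset.sum_congr rfl fun a _ => hb a, ← Finset.sum_mul, hSpq i k, hSpq j l]
    have e1 : ∑ a, B l a * B j a = ∑ a, B j a * B l a :=
      Finset.sum_congr rfl fun a _ => by ring
    have e2 : ∑ b, B k b * B i b = ∑ b, B i b * B k b :=
      Finset.sum_congr rfl fun b _ => by ring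
    rw [e1, e2]; ring
  have w3 : ∑ a, ∑ b, ∑ c, ∑ d, (B l a * B k b * B j c * B i d) * (kron a d * kron b c)
      = S i l * S j k := by
    have hd : ∀ a b c : Fin n, ∑ d, (B l a * B k b * B j c * B i d) * (kron a d * kron b c)
        = ((B k b * B j c * kron b c) * (B l a * B i a)) := by
      intro a b c
      calc ∑ d, (B l a * B k b * B j c * B i d) * (kron a d * kron b c)
          = ∑ d, ((B k b * B j c * kron b c) * (B l a * B i d)) * kron a d :=
            Finset.sum_congr rfl fun d _ => by ring
      _ = _ := kron_collapse (fun d => (B k b * B j c * kron b c) * (B l a * B i d)) a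
    have hc : ∀ a b : Fin n, ∑ c, ∑ d, (B l a * B k b * B j c * B i d) * (kron a d * kron b c)
        = (B k b * B j b) * (B l a * B i a) := by
      intro a b
      rw [Finset.sum_congr rfl fun c _ => hd a b c]
      calc ∑ c, (B k b * B j c * kron b c) * (B l a * B i a)
          = ∑ c, ((B k b * B j c) * (B l a * B i a)) * kron b c :=
            Finset.sum_congr rfl fun c _ => by ring
      _ = _ := kron_collapse (fun c => (B k b * B j c) * (B l a * B i a)) b
    have hb : ∀ a : Fin n, ∑ b, ∑ c, ∑ d, (B l a * B k b * B j c * B i d) * (kron a d * kron b c)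
        = (∑ b, B k b * B j b) * (B l a * B i a) := by
      intro a
      rw [Finset.sum_congr rfl fun b _ => hc a b, ← Finset.sum_mul]
    rw [Finset.sum_congr rfl fun a _ => hb a, ← Finset.mul_sum, hSpq i l, hSpq j k]
    have e1 : ∑ a, B l a * B i a = ∑ a, B i a * B l a :=
      Finset.sum_congr rfl fun a _ => by ring
    have e2 : ∑ b, B k b * B j b = ∑ b, B j b * B k b :=
      Finset.sum_congr rfl fun b _ => by ring
    rw [e1, e2]; ring
  have hWsplit : ∑ a, ∑ b, ∑ c, ∑ d, (B l a * B k b * B j c * B i d) *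
        (Z₀ * (kron a b * kron c d + kron a c * kron b d + kron a d * kron b c))
      = Z₀ * (S i j * S k l + S i k * S j l + S i l * S j k) := by
    have step : ∀ a b c d : Fin n, (B l a * B k b * B j c * B i d) *
        (Z₀ * (kron a b * kron c d + kron a c * kron b d + kron a d * kron b c))
        = Z₀ * ((B l a * B k b * B j c * B i d) * (kron a b * kron c d)
            + (B l a * B k b * B j c * B i d) * (kron a c * kron b d)
            + (B l a * B k b * B j c * B i d) * (kron a d * kron b c)) := by
      intro a b c d; ring
    simp only [step, ← Finset.mul_sum]
    congr 1
    simp only [Finset.sum_add_distrib]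
    rw [w1, w2, w3]
  rw [hIval, hWsplit, hZval]
  have hd0 : |B.det| ≠ 0 := ne_of_gt hdet
  field_simp
end
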